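/- Let G be a finite simple graph whose vertex labeling is a quasi-perfect ordering (QPO). Then (1) every cycle of G of length at least 5 has a chord (an edge of G between two non-consecutive vertices of the cycle); and (2) if in addition G contains no 3-cycles, then G is bipartite. -/

import Mathlib

/-- The vertex labeling of `G` is a *quasi-perfect ordering* (QPO): for every
candidate path `a, c, b, v₁, …, vₘ` (`m ≥ 1`, `a < b < c`, and `vₘ = d` is the only
`vᵢ` smaller than `c`), either `ad` is an edge of `G`, or else `d < b` and `cd` is an
edge of `G`. -/
def IsQPO {n : ℕ} (G : SimpleGraph (Fin n)) : Prop :=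
  ∀ (a c b d : Fin n) (vs : List (Fin n)),
    vs ≠ [] → vs.getLast? = some d →
    List.Chain' G.Adj (a :: c :: b :: vs) →
    (a :: c :: b :: vs).Nodup →
    a < b → b < c → d < c → (∀ v ∈ vs.dropLast, c < v) →
    (G.Adj a d ∨ (d < b ∧ G.Adj c d))

section Helpers

open SimpleGraph

variable {V : Type*} {G : SimpleGraph V}


lemma my_support_getElem? {u v : V} (p : G.Walk u v) :
    ∀ i, i ≤ p.length → p.support[i]? = some (p.getVert i) := by
  induction p with
  | nil => intro i hi; simp at hi; subst hi; simp
  | cons h q ih =>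
    intro i hi
    cases i with
    | zero => simp
    | succ i =>
      rw [Walk.support_cons, List.getElem?_cons_succ, Walk.getVert_cons_succ]
      exact ih i (by simpa using hi)

lemma my_edges_getElem? {u v : V} (p : G.Walk u v) :
    ∀ i, i < p.length → p.edges[i]? = some s(p.getVert i, p.getVert (i + 1)) := by
  induction p with
  | nil => intro i hi; simp at hi
  | cons h q ih =>
    intro i hi
    cases i with
    | zero =>
      rw [Walk.edges_cons, List.getElem?_cons_zero, Walk.getVert_zero,
        Walk.getVert_cons_succ, Walk.getVert_zero]
    | succ i =>
      rw [Walk.edges_cons, List.getElem?_cons_succ, Walk.getVert_cons_succ,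
        Walk.getVert_cons_succ]
      exact ih i (by simpa using hi)

lemma my_closed_inj {w : V} (q : G.Walk w w) (hnd : q.support.tail.Nodup)
    {i j : ℕ} (hi : i ≤ q.length) (hj : j ≤ q.length) (hg : q.getVert i = q.getVert j) :
    i = j ∨ (i = 0 ∧ j = q.length) ∨ (i = q.length ∧ j = 0) := by
  have hlen : q.support.tail.length = q.length := by
    rw [List.length_tail, Walk.length_support]; omega
  have key : ∀ a b, 1 ≤ a → a < b → b ≤ q.length → q.getVert a ≠ q.getVert b := by
    intro a b ha hab hb heq
    rw [List.nodup_iff_getElem?_ne_getElem?] at hnd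
    have h1 : q.support.tail[a - 1]? = some (q.getVert a) := by
      rw [List.getElem?_tail]
      have hh : a - 1 + 1 = a := by omega
      rw [hh]
      exact my_support_getElem? q a (by omega)
    have h2 : q.support.tail[b - 1]? = some (q.getVert b) := by
      rw [List.getElem?_tail]
      have hh : b - 1 + 1 = b := by omega
      rw [hh]
      exact my_support_getElem? q b (by omega)
    exact hnd (a - 1) (b - 1) (by omega) (by omega) (by rw [h1, h2, heq])
  have h0 : q.getVert 0 = q.getVert q.length := by
    rw [Walk.getVert_zero, Walk.getVert_length]
  rcases Nat.lt_trichotomy i j with h | h | h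
  · by_cases hi0 : i = 0
    · subst hi0
      by_cases hjl : j = q.length
      · exact Or.inr (Or.inl ⟨rfl, hjl⟩)
      · exact (key j q.length (by omega) (by omega) le_rfl (hg.symm.trans h0)).elim
    · exact absurd hg (key i j (by omega) h hj)
  · exact Or.inl h
  · by_cases hj0 : j = 0
    · subst hj0
      by_cases hil : i = q.length
      · exact Or.inr (Or.inr ⟨hil, rfl⟩)
      · exact (key i q.length (by omega) (by omega) le_rfl (hg.trans h0)).elim
    · exact absurd hg.symm (key j i (by omega) h hi)

lemma my_length_rotate [DecidableEq V] {v u : V} (c : G.Walk v v) (h : u ∈ c.support) :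
    (c.rotate u h).length = c.length := by
  have h1 := congrArg Walk.length (c.take_spec h)
  rw [Walk.length_append] at h1
  simp only [Walk.rotate, Walk.length_append]
  omega

lemma my_mem_tail {w : V} (q : G.Walk w w) (h0 : q.length ≠ 0) (x : V) :
    x ∈ q.support ↔ x ∈ q.support.tail := by
  constructor
  · intro hx
    rw [q.support_eq_cons] at hx
    rcases List.mem_cons.1 hx with rfl | h
    · refine List.mem_of_getElem? (i := q.length - 1) ?_
      rw [List.getElem?_tail]
      have hh : q.length - 1 + 1 = q.length := by omega
      rw [hh, my_support_getElem? q q.length le_rfl, Walk.getVert_length]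
    · exact h
  · exact List.mem_of_mem_tail

lemma my_mem_rotate [DecidableEq V] {v u : V} (c : G.Walk v v) (h : u ∈ c.support)
    (h0 : c.length ≠ 0) (x : V) : x ∈ (c.rotate u h).support ↔ x ∈ c.support := by
  rw [my_mem_tail _ (by rw [my_length_rotate]; exact h0),
      my_mem_tail _ h0]
  exact (Walk.support_rotate c u h).perm.mem_iff

lemma my_isCycle {w : V} (q : G.Walk w w) (h0 : q.length ≠ 0) (h2 : q.length ≠ 2)
    (hnd : q.support.tail.Nodup) : q.IsCycle := by
  rw [Walk.isCycle_def]
  refine ⟨⟨?_⟩, fun hq => h0 (by rw [hq]; rfl), hnd⟩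
  rw [List.nodup_iff_getElem?_ne_getElem?]
  intro i j hij hjlen heq
  rw [Walk.length_edges] at hjlen
  rw [my_edges_getElem? q i (by omega), my_edges_getElem? q j (by omega)] at heq
  have heq' := Option.some.inj heq
  rw [Sym2.eq, Sym2.rel_iff', Prod.mk.injEq, Prod.swap_prod_mk, Prod.mk.injEq] at heq'
  rcases heq' with ⟨e1, e2⟩ | ⟨e1, e2⟩
  · rcases my_closed_inj q hnd (by omega) (by omega : j ≤ q.length) e1 with h | h | h <;> omega
  · rcases my_closed_inj q hnd (i := i) (j := j + 1) (by omega) (by omega) e1 with h | h | h <;>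
      rcases my_closed_inj q hnd (i := i + 1) (j := j) (by omega) (by omega) e2 with h' | h' | h' <;>
      omega

lemma my_chord {n : ℕ} {G : SimpleGraph (Fin n)} (hqpo : IsQPO G) :
    ∀ (v : Fin n) (c : G.Walk v v), c.IsCycle → 5 ≤ c.length →
      ∃ u w, u ∈ c.support ∧ w ∈ c.support ∧ G.Adj u w ∧ s(u, w) ∉ c.edges := by
  intro v c hc hk5
  set k := c.length with hkdef
  obtain ⟨i₀, hi₀mem, hmax⟩ := (Finset.Icc 1 k).exists_max_image c.getVert
    ⟨1, Finset.mem_Icc.2 ⟨le_rfl, by omega⟩⟩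
  rw [Finset.mem_Icc] at hi₀mem
  have hMsup : c.getVert i₀ ∈ c.support :=
    Walk.mem_support_iff_exists_getVert.2 ⟨i₀, rfl, hi₀mem.2⟩
  set M := c.getVert i₀ with hM
  set q := c.rotate M hMsup with hqdef
  have hqlen : q.length = k := my_length_rotate c hMsup
  have hqcyc : q.IsCycle := hc.rotate hMsup
  have hnd := hqcyc.support_nodup
  have hmem : ∀ x, x ∈ q.support ↔ x ∈ c.support := my_mem_rotate c hMsup (by omega)
  have hcmax : ∀ x ∈ c.support, x ≤ M := by
    intro x hx
    obtain ⟨j, rfl, hj⟩ := Walk.mem_support_iff_exists_getVert.1 hx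
    by_cases hj0 : j = 0
    · subst hj0
      have h00 : c.getVert 0 = c.getVert k := by rw [Walk.getVert_zero, Walk.getVert_length]
      rw [h00]
      exact hmax k (Finset.mem_Icc.2 ⟨by omega, le_rfl⟩)
    · exact hmax j (Finset.mem_Icc.2 ⟨by omega, hj⟩)
  have hqsup : ∀ j, j ≤ k → q.getVert j ∈ c.support := fun j hj =>
    (hmem _).1 (Walk.mem_support_iff_exists_getVert.2 ⟨j, rfl, by omega⟩)
  have hqk : q.getVert k = M := by rw [← hqlen]; exact Walk.getVert_length q
  have inj : ∀ {i j : ℕ}, i ≤ k → j ≤ k → q.getVert i = q.getVert j →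
      i = j ∨ (i = 0 ∧ j = k) ∨ (i = k ∧ j = 0) := by
    intro i j hi hj hg
    have h := my_closed_inj q hnd (by omega) (by omega) hg
    rwa [hqlen] at h
  have gne : ∀ {i j : ℕ}, i ≤ k → j ≤ k → ¬(i = j ∨ (i = 0 ∧ j = k) ∨ (i = k ∧ j = 0)) →
      q.getVert i ≠ q.getVert j := fun hi hj hn he => hn (inj hi hj he)
  have hlt : ∀ j, 1 ≤ j → j ≤ k - 1 → q.getVert j < q.getVert k := by
    intro j h1 h2
    refine lt_of_le_of_ne (by rw [hqk]; exact hcmax _ (hqsup j (by omega)))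
      (gne (by omega) le_rfl (by omega))
  have hadjq : ∀ i, i < k → G.Adj (q.getVert i) (q.getVert (i + 1)) := fun i hi =>
    q.adj_getVert_succ (by omega)
  have A0 : G.Adj (q.getVert k) (q.getVert 1) := by
    rw [hqk]
    simpa using hadjq 0 (by omega)
  have Ak1 : G.Adj (q.getVert (k - 1)) (q.getVert k) := by
    have h := hadjq (k - 1) (by omega)
    rwa [show k - 1 + 1 = k by omega] at h
  have Ak2 : G.Adj (q.getVert (k - 2)) (q.getVert (k - 1)) := by
    have h := hadjq (k - 2) (by omega)
    rwa [show k - 2 + 1 = k - 1 by omega] at h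
  have A1 : G.Adj (q.getVert 1) (q.getVert 2) := by
    have h := hadjq 1 (by omega)
    rwa [show (1 : ℕ) + 1 = 2 from rfl] at h
  have noedge : ∀ s t : ℕ, s ≤ k → t ≤ k →
      (∀ i : ℕ, i < k →
        ¬((i = s ∨ i = 0 ∧ s = k ∨ i = k ∧ s = 0) ∧
          (i + 1 = t ∨ i + 1 = 0 ∧ t = k ∨ i + 1 = k ∧ t = 0)) ∧
        ¬((i = t ∨ i = 0 ∧ t = k ∨ i = k ∧ t = 0) ∧
          (i + 1 = s ∨ i + 1 = 0 ∧ s = k ∨ i + 1 = k ∧ s = 0))) →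
      s(q.getVert s, q.getVert t) ∉ c.edges := by
    intro s t hs ht hcond he
    have h1 := (Walk.rotate_edges c M hMsup).perm.mem_iff.2 he
    obtain ⟨i, hi⟩ := List.mem_iff_getElem?.1 h1
    have hilen : i < k := by
      obtain ⟨hl, -⟩ := List.getElem?_eq_some_iff.1 hi
      rwa [Walk.length_edges, hqlen] at hl
    rw [my_edges_getElem? q i (by omega)] at hi
    have heq' := Option.some.inj hi
    rw [Sym2.eq, Sym2.rel_iff', Prod.mk.injEq, Prod.swap_prod_mk, Prod.mk.injEq] at heq'
    obtain ⟨hc1, hc2⟩ := hcond i hilen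
    rcases heq' with ⟨e1, e2⟩ | ⟨e1, e2⟩
    · exact hc1 ⟨inj (by omega) hs e1, inj (by omega) ht e2⟩
    · exact hc2 ⟨inj (by omega) ht e1, inj (by omega) hs e2⟩
  rcases lt_or_gt_of_ne (gne (i := 1) (j := k - 1) (by omega) (by omega) (by omega)) with hxy | hxy
  · -- getVert 1 < getVert (k-1) : candidate path x1, M, y1, y2
    have hres := hqpo (q.getVert 1) (q.getVert k) (q.getVert (k - 1)) (q.getVert (k - 2))
      [q.getVert (k - 2)] (by simp) (by simp)
      (List.isChain_cons_cons.2 ⟨A0.symm, List.isChain_cons_cons.2 ⟨Ak1.symm,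
        List.isChain_cons_cons.2 ⟨Ak2.symm, List.isChain_singleton _⟩⟩⟩)
      (by
        simp only [List.nodup_cons, List.mem_cons, List.mem_singleton, List.not_mem_nil,
          or_false, not_or, List.nodup_nil, and_true, not_false_iff]
        exact ⟨⟨gne (by omega) le_rfl (by omega), gne (by omega) (by omega) (by omega),
            gne (by omega) (by omega) (by omega)⟩,
          ⟨gne le_rfl (by omega) (by omega), gne le_rfl (by omega) (by omega)⟩,
          gne (by omega) (by omega) (by omega)⟩)
      hxy (hlt (k - 1) (by omega) (by omega)) (hlt (k - 2) (by omega) (by omega))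
      (by simp)
    rcases hres with h | ⟨-, h⟩
    · exact ⟨_, _, hqsup 1 (by omega), hqsup (k - 2) (by omega), h,
        noedge 1 (k - 2) (by omega) (by omega) (by intro i hi; omega)⟩
    · exact ⟨_, _, hqsup k le_rfl, hqsup (k - 2) (by omega), h,
        noedge k (k - 2) le_rfl (by omega) (by intro i hi; omega)⟩
  · -- candidate path y1, M, x1, x2
    have hres := hqpo (q.getVert (k - 1)) (q.getVert k) (q.getVert 1) (q.getVert 2)
      [q.getVert 2] (by simp) (by simp)
      (List.isChain_cons_cons.2 ⟨Ak1, List.isChain_cons_cons.2 ⟨A0,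
        List.isChain_cons_cons.2 ⟨A1, List.isChain_singleton _⟩⟩⟩)
      (by
        simp only [List.nodup_cons, List.mem_cons, List.mem_singleton, List.not_mem_nil,
          or_false, not_or, List.nodup_nil, and_true, not_false_iff]
        exact ⟨⟨gne (by omega) le_rfl (by omega), gne (by omega) (by omega) (by omega),
            gne (by omega) (by omega) (by omega)⟩,
          ⟨gne le_rfl (by omega) (by omega), gne le_rfl (by omega) (by omega)⟩,
          gne (by omega) (by omega) (by omega)⟩)
      hxy (hlt 1 (by omega) (by omega)) (hlt 2 (by omega) (by omega))
      (by simp)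
    rcases hres with h | ⟨-, h⟩
    · exact ⟨_, _, hqsup (k - 1) (by omega), hqsup 2 (by omega), h,
        noedge (k - 1) 2 (by omega) (by omega) (by intro i hi; omega)⟩
    · exact ⟨_, _, hqsup k le_rfl, hqsup 2 (by omega), h,
        noedge k 2 le_rfl (by omega) (by intro i hi; omega)⟩

lemma my_no_odd {n : ℕ} {G : SimpleGraph (Fin n)} (hqpo : IsQPO G)
    (htri : ∀ i j k : Fin n, G.Adj i j → G.Adj j k → G.Adj i k → False) :
    ∀ ℓ : ℕ, Odd ℓ → ∀ (w : Fin n) (q : G.Walk w w), q.length = ℓ → False := by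
  intro ℓ
  induction ℓ using Nat.strong_induction_on with
  | _ ℓ ih =>
  intro hodd w q hql
  have hodd' := Nat.odd_iff.1 hodd
  have hℓ0 : ℓ ≠ 0 := by omega
  by_cases hnd : q.support.tail.Nodup
  · -- q is a cycle
    have hcyc : q.IsCycle := my_isCycle q (by omega) (by omega) hnd
    have h3 := hcyc.three_le_length
    rw [hql] at h3
    by_cases h3' : ℓ = 3
    · have a0 := q.adj_getVert_succ (i := 0) (by omega)
      have a1 := q.adj_getVert_succ (i := 1) (by omega)
      have a2 := q.adj_getVert_succ (i := 2) (by omega)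
      have e3 : q.getVert (2 + 1) = q.getVert 0 := by
        rw [show (2 + 1 : ℕ) = q.length by omega, Walk.getVert_length, Walk.getVert_zero]
      rw [e3] at a2
      exact htri _ _ _ a0 a1 a2.symm
    · have h5 : 5 ≤ q.length := by omega
      obtain ⟨u, z, hu, hz, hadj, hne⟩ := my_chord hqpo w q hcyc h5
      have hrlen : (q.rotate u hu).length = ℓ := (my_length_rotate q hu).trans hql
      have hz' : z ∈ (q.rotate u hu).support := (my_mem_rotate q hu (by omega) z).2 hz
      set r := q.rotate u hu with hrdef
      set t := r.takeUntil z hz' with htdef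
      set d := r.dropUntil z hz' with hddef
      have hsplit := r.take_spec hz'
      have hlen : t.length + d.length = ℓ := by
        have h := congrArg Walk.length hsplit
        rwa [Walk.length_append, hrlen] at h
      have hredge : ∀ e, e ∈ r.edges → e ∈ q.edges := fun e he =>
        (Walk.rotate_edges q u hu).perm.mem_iff.1 he
      have ht0 : t.length ≠ 0 := by
        intro h0
        have hh := Walk.getVert_length t
        rw [h0, Walk.getVert_zero] at hh
        exact hadj.ne hh
      have hd0 : d.length ≠ 0 := by
        intro h0
        have hh := Walk.getVert_length d
        rw [h0, Walk.getVert_zero] at hh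
        exact hadj.ne hh.symm
      have ht1 : t.length ≠ 1 := by
        intro h1
        apply hne
        apply hredge
        apply Walk.edges_takeUntil_subset r hz'
        have hh := my_edges_getElem? t 0 (by omega)
        rw [Walk.getVert_zero, show (0 + 1 : ℕ) = t.length by omega, Walk.getVert_length] at hh
        exact List.mem_of_getElem? hh
      have hd1 : d.length ≠ 1 := by
        intro h1
        apply hne
        apply hredge
        apply Walk.edges_dropUntil_subset r hz'
        have hh := my_edges_getElem? d 0 (by omega)
        rw [Walk.getVert_zero, show (0 + 1 : ℕ) = d.length by omega, Walk.getVert_length,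
          Sym2.eq_swap] at hh
        exact List.mem_of_getElem? hh
      have hW1 : (t.append (Walk.cons hadj.symm Walk.nil)).length = t.length + 1 := by
        simp [Walk.length_append]
      have hW2 : (d.append (Walk.cons hadj Walk.nil)).length = d.length + 1 := by
        simp [Walk.length_append]
      rcases Nat.even_or_odd t.length with hpar | hpar
      · exact ih (t.length + 1) (by omega)
          (by rw [Nat.odd_iff]; rw [Nat.even_iff] at hpar; omega) u _ hW1
      · have hdpar : Even d.length := by
          rw [Nat.odd_iff] at hpar; rw [Nat.even_iff]; omega
        exact ih (d.length + 1) (by omega)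
          (by rw [Nat.odd_iff]; rw [Nat.even_iff] at hdpar; omega) z _ hW2
  · -- repeated vertex
    obtain ⟨x, hdup⟩ := List.exists_duplicate_iff_not_nodup.2 hnd
    have hcount : 2 ≤ q.support.tail.count x := List.duplicate_iff_two_le_count.1 hdup
    have hx : x ∈ q.support := List.mem_of_mem_tail hdup.mem
    have hrlen : (q.rotate x hx).length = ℓ := (my_length_rotate q hx).trans hql
    set r := q.rotate x hx with hrdef
    have hrn : ¬ r.Nil := by rw [Walk.not_nil_iff_lt_length]; omega
    have hcount2 : 2 ≤ r.support.tail.count x := by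
      rw [(Walk.support_rotate q x hx).perm.count_eq]
      exact hcount
    have hsupp : r.tail.support = r.support.tail := Walk.support_tail_of_not_nil r hrn
    have hx' : x ∈ r.tail.support := by
      rw [hsupp]
      exact List.count_pos_iff.1 (by omega)
    set t := r.tail.takeUntil x hx' with htdef
    set d := r.tail.dropUntil x hx' with hddef
    have hsplit := r.tail.take_spec hx'
    have hcount_t : t.support.count x = 1 := Walk.count_support_takeUntil_eq_one r.tail hx'
    have hsupp_eq : r.tail.support = t.support ++ d.support.tail := by
      have h := congrArg Walk.support hsplit
      rw [Walk.support_append] at h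
      exact h.symm
    have hcount_d : 1 ≤ d.support.tail.count x := by
      have h : 2 ≤ (t.support ++ d.support.tail).count x := by
        rw [← hsupp_eq, hsupp]; exact hcount2
      rw [List.count_append, hcount_t] at h
      omega
    have hd0 : d.length ≠ 0 := by
      intro h0
      have hh : d.support.tail = [] := by
        apply List.eq_nil_of_length_eq_zero
        rw [List.length_tail, Walk.length_support, h0]
      rw [hh] at hcount_d
      simp at hcount_d
    have hlens : 1 + t.length + d.length = ℓ := by
      have h1 := congrArg Walk.length hsplit
      rw [Walk.length_append] at h1
      rw [← htdef, ← hddef] at h1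
      have h2 := Walk.length_tail_add_one hrn
      omega
    have hW1 : (Walk.cons (Walk.adj_snd hrn) t).length = t.length + 1 := by
      simp [Walk.length_cons]
    rcases Nat.even_or_odd t.length with hpar | hpar
    · exact ih (t.length + 1) (by omega)
        (by rw [Nat.odd_iff]; rw [Nat.even_iff] at hpar; omega) x _ hW1
    · have hdpar : Odd d.length := by
        rw [Nat.odd_iff] at hpar ⊢; omega
      exact ih d.length (by omega) hdpar x d rfl

lemma my_colorable {n : ℕ} {G : SimpleGraph (Fin n)}
    (hno : ∀ ℓ : ℕ, Odd ℓ → ∀ (w : Fin n) (q : G.Walk w w), q.length = ℓ → False) :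
    G.Colorable 2 := by
  classical
  refine ⟨Coloring.mk (fun v => if Odd (G.dist (G.connectedComponentMk v).out v) then 1 else 0) ?_⟩
  intro v w hadj hcol
  have hcomp : G.connectedComponentMk v = G.connectedComponentMk w :=
    ConnectedComponent.connectedComponentMk_eq_of_adj hadj
  rw [hcomp] at hcol
  set rep := (G.connectedComponentMk w).out with hrep
  have hrv : G.Reachable rep v :=
    ConnectedComponent.eq.1 ((Quot.out_eq (G.connectedComponentMk w)).trans hcomp.symm)
  have hrw : G.Reachable rep w := ConnectedComponent.eq.1 (Quot.out_eq (G.connectedComponentMk w))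
  obtain ⟨p, hp⟩ := hrv.exists_walk_length_eq_dist
  obtain ⟨p', hp'⟩ := hrw.exists_walk_length_eq_dist
  have hclosed : (p.append (Walk.cons hadj p'.reverse)).length
      = p.length + p'.length + 1 := by
    simp [Walk.length_append, Walk.length_cons, Walk.length_reverse]
    omega
  have hparity : ¬ Odd (p.length + p'.length + 1) := by
    intro hoddw
    exact hno _ hoddw rep _ hclosed
  rw [Nat.odd_iff] at hparity
  simp only [Nat.odd_iff] at hcol
  have hceq : G.dist rep v % 2 = G.dist rep w % 2 := by
    by_cases h1 : G.dist rep v % 2 = 1 <;> by_cases h2 : G.dist rep w % 2 = 1 <;>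
      simp [h1, h2] at hcol <;> omega
  exact hparity (by omega)

end Helpers

theorem stmt_16 {n : ℕ} (G : SimpleGraph (Fin n)) (hqpo : IsQPO G) :
    (∀ (v : Fin n) (c : G.Walk v v), c.IsCycle → 5 ≤ c.length →
        ∃ u w, u ∈ c.support ∧ w ∈ c.support ∧ G.Adj u w ∧ s(u, w) ∉ c.edges) ∧
    ((∀ i j k : Fin n, G.Adj i j → G.Adj j k → G.Adj i k → False) →
      G.Colorable 2) := by
  constructor
  · exact my_chord hqpo
  · intro htri
    exact my_colorable (my_no_odd hqpo htri)
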